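/- arXiv:2505.12915 — 3 statements merged into one kernel-verified Lean document; each statement's English description precedes it below -/
import Mathlib

section
/- The algebra A = K⟨x,y⟩/(x², xy + y² + y²x) over a field K of characteristic 0 has K-vector space dimension 6. -/
set_option maxHeartbeats 1000000

universe u

noncomputable section

/-- The generator `x` of the free algebra `K⟨x,y⟩`. -/
def Xg (K : Type u) [Field K] : FreeAlgebra K (Fin 2) := FreeAlgebra.ι K 0

/-- The generator `y` of the free algebra `K⟨x,y⟩`. -/
def Yg (K : Type u) [Field K] : FreeAlgebra K (Fin 2) := FreeAlgebra.ι K 1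

/-- The relations `x² = 0` and `xy + y² + y²x = 0`. -/
inductive ARel (K : Type u) [Field K] :
    FreeAlgebra K (Fin 2) → FreeAlgebra K (Fin 2) → Prop
  | sq : ARel K (Xg K * Xg K) 0
  | mix : ARel K (Xg K * Yg K + Yg K * Yg K + Yg K * Yg K * Xg K) 0

/-- The algebra `A = K⟨x,y⟩/(x², xy + y² + y²x)`, the quotient of the free associative
algebra on `x, y` by the two-sided ideal generated by `x²` and `xy + y² + y²x`. -/
def AlgA (K : Type u) [Field K] : Type u := RingQuot (ARel K)

instance (K : Type u) [Field K] : Ring (AlgA K) :=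
  inferInstanceAs (Ring (RingQuot (ARel K)))

instance (K : Type u) [Field K] : Algebra K (AlgA K) :=
  inferInstanceAs (Algebra K (RingQuot (ARel K)))

/-! ### Auxiliary material -/

/-- Key identities in any ring from the relations `a² = 0` and `ab + b² + b²a = 0`. -/
theorem key_ids {R : Type*} [Ring R] (a b : R) (z1 : a * a = 0)
    (z2 : a * b + b * b + b * b * a = 0) :
    a * b * a = a * b + b * b ∧ a * b * b = 0 ∧ b * b * b = 0 ∧ b * a * b = 0 := by
  have z3 : a*b*a - a*b - b*b = 0 := by
    have h : a*b*a - a*b - b*b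
        = (a*b + b*b + b*b*a)*a - b*b*(a*a) - (a*b + b*b + b*b*a) := by noncomm_ring
    rw [z1, z2] at h; simpa using h
  have z4 : a*b*b + a*b*b*a = 0 := by
    have h : a*b*b + a*b*b*a = a*(a*b + b*b + b*b*a) - (a*a)*b := by noncomm_ring
    rw [z1, z2] at h; simpa using h
  have z5 : a*b*b*a = 0 := by
    have h : a*b*b*a = (a*b*b + a*b*b*a)*a - (a*b*b)*(a*a) := by noncomm_ring
    rw [z1, z4] at h; simpa using h
  have z6 : a*b*b = 0 := by
    have h : a*b*b = (a*b*b + a*b*b*a) - a*b*b*a := by noncomm_ring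
    rw [z4, z5] at h; simpa using h
  have z7 : a*b*a*b - b*b*b = 0 := by
    have h : a*b*a*b - b*b*b = (a*b*a - a*b - b*b)*b + a*b*b := by noncomm_ring
    rw [z3, z6] at h; simpa using h
  have z8 : b*a*b + b*b*b + b*b*b*a = 0 := by
    have h : b*a*b + b*b*b + b*b*b*a = b*(a*b + b*b + b*b*a) := by noncomm_ring
    rw [z2] at h; simpa using h
  have z9 : b*a*b + b*b*b + b*b*b = 0 := by
    have h : b*a*b + b*b*b + b*b*b
        = (a*b*a*b - b*b*b)*a - a*b*(a*b*a - a*b - b*b) + (b*a*b + b*b*b + b*b*b*a)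
          - (a*b*a*b - b*b*b) - (a*b*b)*b := by noncomm_ring
    rw [z3, z6, z7, z8] at h; simpa using h
  have z10 : b*b*b = 0 := by
    have h : b*b*b
        = -(b*(a*b*a - a*b - b*b)) + (b*a*b + b*b*b + b*b*b)*a
          - (b*a*b + b*b*b + b*b*b*a) - (b*a*b + b*b*b + b*b*b*a)
          + (b*a*b + b*b*b + b*b*b) := by noncomm_ring
    rw [z3, z8, z9] at h; simpa using h
  have z11 : b*a*b = 0 := by
    have h : b*a*b = (b*a*b + b*b*b + b*b*b) - b*b*b - b*b*b := by noncomm_ring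
    rw [z9, z10] at h; simpa using h
  have e2 : a*b*a = a*b + b*b := by
    have h : a*b*a = (a*b*a - a*b - b*b) + (a*b + b*b) := by noncomm_ring
    rw [z3] at h; simpa using h
  exact ⟨e2, z6, z10, z11⟩

section vecLemmas
variable {α : Type*} (a b c d e f : α)
@[simp] lemma cv0' : ![a,b,c,d,e,f] 0 = a := rfl
@[simp] lemma cv1' : ![a,b,c,d,e,f] 1 = b := rfl
@[simp] lemma cv2' : ![a,b,c,d,e,f] 2 = c := rfl
@[simp] lemma cv3' : ![a,b,c,d,e,f] 3 = d := rfl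
@[simp] lemma cv4' : ![a,b,c,d,e,f] 4 = e := rfl
@[simp] lemma cv5' : ![a,b,c,d,e,f] 5 = f := rfl
end vecLemmas

/-- Matrix of left multiplication by `x` on the basis `1, x, y, xy, yx, y²`. -/
def Xm (K : Type u) [Field K] : Matrix (Fin 6) (Fin 6) K :=
  !![0,0,0,0,0,0;
     1,0,0,0,0,0;
     0,0,0,0,0,0;
     0,0,1,0,1,0;
     0,0,0,0,0,0;
     0,0,0,0,1,0]

/-- Matrix of left multiplication by `y` on the basis `1, x, y, xy, yx, y²`. -/
def Ym (K : Type u) [Field K] : Matrix (Fin 6) (Fin 6) K :=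
  !![0,0,0,0,0,0;
     0,0,0,0,0,0;
     1,0,0,0,0,0;
     0,0,0,0,-1,0;
     0,1,0,0,0,0;
     0,0,1,0,-1,0]

theorem Xm_sq (K : Type u) [Field K] : Xm K * Xm K = 0 := by
  ext i j
  fin_cases i <;> fin_cases j <;>
    norm_num [Xm, Matrix.mul_apply, Fin.sum_univ_six, Matrix.of_apply,
      Matrix.vecHead, Matrix.vecTail] <;> simp

theorem XYm (K : Type u) [Field K] : Xm K * Ym K =
    !![0,0,0,0,0,0; 0,0,0,0,0,0; 0,0,0,0,0,0;
       1,1,0,0,0,0; 0,0,0,0,0,0; 0,1,0,0,0,0] := by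
  ext i j
  fin_cases i <;> fin_cases j <;>
    norm_num [Xm, Ym, Matrix.mul_apply, Fin.sum_univ_six, Matrix.of_apply,
      Matrix.vecHead, Matrix.vecTail] <;> simp

theorem YXm (K : Type u) [Field K] : Ym K * Xm K =
    !![0,0,0,0,0,0; 0,0,0,0,0,0; 0,0,0,0,0,0;
       0,0,0,0,0,0; 1,0,0,0,0,0; 0,0,0,0,0,0] := by
  ext i j
  fin_cases i <;> fin_cases j <;>
    norm_num [Xm, Ym, Matrix.mul_apply, Fin.sum_univ_six, Matrix.of_apply,
      Matrix.vecHead, Matrix.vecTail] <;> simp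

theorem YYm (K : Type u) [Field K] : Ym K * Ym K =
    !![0,0,0,0,0,0; 0,0,0,0,0,0; 0,0,0,0,0,0;
       0,-1,0,0,0,0; 0,0,0,0,0,0; 1,-1,0,0,0,0] := by
  ext i j
  fin_cases i <;> fin_cases j <;>
    norm_num [Xm, Ym, Matrix.mul_apply, Fin.sum_univ_six, Matrix.of_apply,
      Matrix.vecHead, Matrix.vecTail] <;> simp

theorem mix_mat (K : Type u) [Field K] :
    Xm K * Ym K + Ym K * Ym K + Ym K * Ym K * Xm K = 0 := by
  rw [XYm, YYm]
  have h3 : (!![0,0,0,0,0,0; 0,0,0,0,0,0; 0,0,0,0,0,0;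
       0,-1,0,0,0,0; 0,0,0,0,0,0; 1,-1,0,0,0,0] : Matrix (Fin 6) (Fin 6) K) * Xm K =
      !![0,0,0,0,0,0; 0,0,0,0,0,0; 0,0,0,0,0,0;
         -1,0,0,0,0,0; 0,0,0,0,0,0; -1,0,0,0,0,0] := by
    ext i j
    fin_cases i <;> fin_cases j <;>
      norm_num [Xm, Matrix.mul_apply, Fin.sum_univ_six, Matrix.of_apply,
        Matrix.vecHead, Matrix.vecTail] <;> simp
  rw [h3]
  ext i j
  fin_cases i <;> fin_cases j <;>
    norm_num [Matrix.of_apply, Matrix.vecHead, Matrix.vecTail] <;> simp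

/-- The quotient map, with codomain `AlgA K`. -/
def piA (K : Type u) [Field K] : FreeAlgebra K (Fin 2) →ₐ[K] AlgA K :=
  RingQuot.mkAlgHom K (ARel K)

/-- The image of `x` in `A`. -/
def xA (K : Type u) [Field K] : AlgA K := RingQuot.mkAlgHom K (ARel K) (Xg K)

/-- The image of `y` in `A`. -/
def yA (K : Type u) [Field K] : AlgA K := RingQuot.mkAlgHom K (ARel K) (Yg K)

theorem xA_sq (K : Type u) [Field K] : xA K * xA K = 0 := by
  have h := RingQuot.mkAlgHom_rel K (ARel.sq (K := K))
  simp only [map_mul, map_zero] at h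
  simp only [xA]; exact h

theorem mix_A (K : Type u) [Field K] :
    xA K * yA K + yA K * yA K + yA K * yA K * xA K = 0 := by
  have h := RingQuot.mkAlgHom_rel K (ARel.mix (K := K))
  simp only [map_add, map_mul, map_zero] at h
  simp only [xA, yA]; exact h

/-- The spanning family `1, x, y, xy, yx, y²` in `A`. -/
def vfam (K : Type u) [Field K] : Fin 6 → AlgA K :=
  ![1, xA K, yA K, xA K * yA K, yA K * xA K, yA K * yA K]

/-- The representation of the free algebra on `K⁶`. -/
def φf (K : Type u) [Field K] : FreeAlgebra K (Fin 2) →ₐ[K] Matrix (Fin 6) (Fin 6) K :=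
  FreeAlgebra.lift K ![Xm K, Ym K]

theorem φf_rel (K : Type u) [Field K] :
    ∀ ⦃u v⦄, ARel K u v → φf K u = φf K v := by
  intro u v h
  induction h with
  | sq =>
      simp only [map_mul, map_zero, Xg, φf, FreeAlgebra.lift_ι_apply,
        Matrix.cons_val_zero]
      exact Xm_sq K
  | mix =>
      simp only [map_add, map_mul, map_zero, Xg, Yg, φf, FreeAlgebra.lift_ι_apply,
        Matrix.cons_val_zero, Matrix.cons_val_one, Matrix.head_cons]
      exact mix_mat K

/-- The representation of `A` on `K⁶`. -/
def φA (K : Type u) [Field K] : AlgA K →ₐ[K] Matrix (Fin 6) (Fin 6) K :=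
  RingQuot.liftAlgHom K ⟨φf K, φf_rel K⟩

theorem φA_x (K : Type u) [Field K] : φA K (xA K) = Xm K := by
  show (RingQuot.liftAlgHom K ⟨φf K, φf_rel K⟩) (RingQuot.mkAlgHom K (ARel K) (Xg K)) = Xm K
  rw [RingQuot.liftAlgHom_mkAlgHom_apply]
  simp [φf, Xg, FreeAlgebra.lift_ι_apply]

theorem φA_y (K : Type u) [Field K] : φA K (yA K) = Ym K := by
  show (RingQuot.liftAlgHom K ⟨φf K, φf_rel K⟩) (RingQuot.mkAlgHom K (ARel K) (Yg K)) = Ym K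
  rw [RingQuot.liftAlgHom_mkAlgHom_apply]
  simp [φf, Yg, FreeAlgebra.lift_ι_apply]

/-- The linear map taking a matrix to its 0-th column. -/
def col0 (K : Type u) [Field K] : Matrix (Fin 6) (Fin 6) K →ₗ[K] (Fin 6 → K) where
  toFun M := fun i => M i 0
  map_add' := fun _ _ => rfl
  map_smul' := fun _ _ => rfl

@[simp] theorem col0_apply (K : Type u) [Field K] (M : Matrix (Fin 6) (Fin 6) K) (i : Fin 6) :
    col0 K M i = M i 0 := rfl

theorem comp_eval (K : Type u) [Field K] (i : Fin 6) :
    col0 K (φA K (vfam K i)) = Pi.single i 1 := by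
  fin_cases i
  · show col0 K (φA K 1) = _
    rw [map_one]
    funext j
    fin_cases j <;>
      norm_num [Matrix.one_apply, Pi.single_apply, Fin.ext_iff]
  · show col0 K (φA K (xA K)) = _
    rw [φA_x]
    funext j
    fin_cases j <;> norm_num [Xm, Pi.single_apply, Fin.ext_iff, Matrix.of_apply]
  · show col0 K (φA K (yA K)) = _
    rw [φA_y]
    funext j
    fin_cases j <;> norm_num [Ym, Pi.single_apply, Fin.ext_iff, Matrix.of_apply]
  · show col0 K (φA K (xA K * yA K)) = _
    rw [map_mul, φA_x, φA_y, XYm]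
    funext j
    fin_cases j <;> norm_num [Pi.single_apply, Fin.ext_iff, Matrix.of_apply]
  · show col0 K (φA K (yA K * xA K)) = _
    rw [map_mul, φA_x, φA_y, YXm]
    funext j
    fin_cases j <;> norm_num [Pi.single_apply, Fin.ext_iff, Matrix.of_apply]
  · show col0 K (φA K (yA K * yA K)) = _
    rw [map_mul, φA_y, YYm]
    funext j
    fin_cases j <;> norm_num [Pi.single_apply, Fin.ext_iff, Matrix.of_apply]

theorem vfam_li (K : Type u) [Field K] : LinearIndependent K (vfam K) := by
  apply LinearIndependent.of_comp ((col0 K).comp (φA K).toLinearMap)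
  have hfe : (((col0 K).comp (φA K).toLinearMap) ∘ vfam K)
      = fun i : Fin 6 => (Pi.single i 1 : Fin 6 → K) := by
    funext i
    simpa using comp_eval K i
  rw [hfe]
  have hb : ⇑(Pi.basisFun K (Fin 6)) = fun i : Fin 6 => (Pi.single i 1 : Fin 6 → K) := by
    funext i
    exact Pi.basisFun_apply K (Fin 6) i
  rw [← hb]
  exact (Pi.basisFun K (Fin 6)).linearIndependent

theorem vfam_span (K : Type u) [Field K] :
    Submodule.span K (Set.range (vfam K)) = ⊤ := by
  obtain ⟨exya, exyy, eyyy, eyxy⟩ := key_ids (xA K) (yA K) (xA_sq K) (mix_A K)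
  have eyyx : yA K * yA K * xA K = -(xA K * yA K) - yA K * yA K := by
    have h : yA K * yA K * xA K
        = (xA K * yA K + yA K * yA K + yA K * yA K * xA K)
          - xA K * yA K - yA K * yA K := by noncomm_ring
    rw [mix_A] at h; simpa using h
  set S : Submodule K (AlgA K) := Submodule.span K (Set.range (vfam K)) with hS
  have mem : ∀ i : Fin 6, vfam K i ∈ S := fun i => Submodule.subset_span ⟨i, rfl⟩
  have m0 : (1 : AlgA K) ∈ S := mem 0
  have m1 : xA K ∈ S := mem 1
  have m2 : yA K ∈ S := mem 2
  have m3 : xA K * yA K ∈ S := mem 3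
  have m4 : yA K * xA K ∈ S := mem 4
  have m5 : yA K * yA K ∈ S := mem 5
  have hxgen : ∀ i : Fin 6, xA K * vfam K i ∈ S := by
    intro i
    fin_cases i
    · show xA K * 1 ∈ S
      rw [mul_one]; exact m1
    · show xA K * xA K ∈ S
      rw [xA_sq]; exact S.zero_mem
    · show xA K * yA K ∈ S
      exact m3
    · show xA K * (xA K * yA K) ∈ S
      rw [← mul_assoc, xA_sq, zero_mul]; exact S.zero_mem
    · show xA K * (yA K * xA K) ∈ S
      rw [← mul_assoc, exya]; exact S.add_mem m3 m5
    · show xA K * (yA K * yA K) ∈ S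
      rw [← mul_assoc, exyy]; exact S.zero_mem
  have hygen : ∀ i : Fin 6, yA K * vfam K i ∈ S := by
    intro i
    fin_cases i
    · show yA K * 1 ∈ S
      rw [mul_one]; exact m2
    · show yA K * xA K ∈ S
      exact m4
    · show yA K * yA K ∈ S
      exact m5
    · show yA K * (xA K * yA K) ∈ S
      rw [← mul_assoc, eyxy]; exact S.zero_mem
    · show yA K * (yA K * xA K) ∈ S
      rw [← mul_assoc, eyyx]
      exact S.sub_mem (S.neg_mem m3) m5
    · show yA K * (yA K * yA K) ∈ S
      rw [← mul_assoc, eyyy]; exact S.zero_mem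
  have hxm : ∀ m ∈ S, xA K * m ∈ S := by
    have hle : S ≤ Submodule.comap (LinearMap.mulLeft K (xA K)) S := by
      rw [hS, Submodule.span_le]
      rintro z ⟨i, rfl⟩
      simp only [SetLike.mem_coe, Submodule.mem_comap, LinearMap.mulLeft_apply]
      exact hxgen i
    intro m hm; exact hle hm
  have hym : ∀ m ∈ S, yA K * m ∈ S := by
    have hle : S ≤ Submodule.comap (LinearMap.mulLeft K (yA K)) S := by
      rw [hS, Submodule.span_le]
      rintro z ⟨i, rfl⟩
      simp only [SetLike.mem_coe, Submodule.mem_comap, LinearMap.mulLeft_apply]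
      exact hygen i
    intro m hm; exact hle hm
  have key : ∀ f : FreeAlgebra K (Fin 2), ∀ m ∈ S, piA K f * m ∈ S := by
    intro f
    induction f with
    | grade0 r =>
        intro m hm
        rw [AlgHom.commutes, ← Algebra.smul_def]
        exact S.smul_mem r hm
    | grade1 i =>
        fin_cases i
        · exact hxm
        · exact hym
    | mul f g hf hg =>
        intro m hm
        rw [map_mul, mul_assoc]
        exact hf _ (hg m hm)
    | add f g hf hg =>
        intro m hm
        rw [map_add, add_mul]
        exact S.add_mem (hf m hm) (hg m hm)
  rw [eq_top_iff]
  intro z _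
  obtain ⟨f, hf⟩ := RingQuot.mkAlgHom_surjective K (ARel K) z
  rw [← hf]
  have hk := key f 1 m0
  rw [mul_one] at hk; exact hk

/-- The algebra `A = K⟨x,y⟩/(x², xy + y² + y²x)` over a field `K` of characteristic 0
has `K`-vector space dimension 6. -/
theorem stmt_2 (K : Type u) [Field K] [CharZero K] :
    Module.finrank K (AlgA K) = 6 := by
  have B : Module.Basis (Fin 6) K (AlgA K) :=
    Module.Basis.mk (vfam_li K) (by rw [vfam_span])
  rw [Module.finrank_eq_card_basis B, Fintype.card_fin]

end
end

section
/- The algebra A = K⟨x,y⟩/(x², xy + y² + y²x) over a field K of characteristic 0 is a local ring, and its quotient by its Jacobson radical is isomorphic to K as a K-algebra. -/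
universe u

noncomputable section

/-- The Jacobson radical of `A` as a two-sided ideal. -/
def jacRad (K : Type u) [Field K] : TwoSidedIdeal (AlgA K) :=
  TwoSidedIdeal.jacobson (⊥ : TwoSidedIdeal (AlgA K))

namespace StmtThreeAux

/-- auxiliary: bilinearity of products over spans -/
lemma span_mul_span_le {R A : Type*} [CommSemiring R] [Semiring A] [Algebra R A]
    {S T : Set A} {U : Submodule R A}
    (h : ∀ a ∈ S, ∀ b ∈ T, a * b ∈ U) :
    ∀ a ∈ Submodule.span R S, ∀ b ∈ Submodule.span R T, a * b ∈ U := by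
  intro a ha b hb
  induction ha using Submodule.span_induction with
  | mem x hx =>
    induction hb using Submodule.span_induction with
    | mem y hy => exact h x hx y hy
    | zero => rw [mul_zero]; exact U.zero_mem
    | add y z _ _ hy hz => rw [mul_add]; exact U.add_mem hy hz
    | smul c y _ hy => rw [mul_smul_comm]; exact U.smul_mem c hy
  | zero => rw [zero_mul]; exact U.zero_mem
  | add x y _ _ hx hy => rw [add_mul]; exact U.add_mem hx hy
  | smul c x _ hx => rw [smul_mul_assoc]; exact U.smul_mem c hx

variable (K : Type u) [Field K]

/-- The image of `x` in `A`. -/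
def Ax : AlgA K := RingQuot.mkAlgHom K (ARel K) (Xg K)

/-- The image of `y` in `A`. -/
def Ay : AlgA K := RingQuot.mkAlgHom K (ARel K) (Yg K)

lemma relA : Ax K * Ax K = 0 := by
  have h := RingQuot.mkAlgHom_rel K (ARel.sq (K := K))
  simp only [map_mul, map_zero] at h
  exact h

lemma relB : Ax K * Ay K + Ay K * Ay K + Ay K * Ay K * Ax K = 0 := by
  have h := RingQuot.mkAlgHom_rel K (ARel.mix (K := K))
  simp only [map_mul, map_add, map_zero] at h
  exact h

lemma relB' : (Ay K * Ay K) * Ax K = -(Ax K * Ay K) - Ay K * Ay K := by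
  have h := eq_neg_of_add_eq_zero_right (relB K)
  rw [show Ay K * Ay K * Ax K = (Ay K * Ay K) * Ax K from rfl, h, neg_add]
  abel

lemma c3 : Ay K * (Ay K * Ax K) = -(Ax K * Ay K) - Ay K * Ay K := by
  rw [← mul_assoc]; exact relB' K

lemma c4 : Ax K * (Ay K * Ax K) = Ax K * Ay K + Ay K * Ay K := by
  have h : (Ax K * Ay K + Ay K * Ay K + Ay K * Ay K * Ax K) * Ax K = 0 := by
    rw [relB K, zero_mul]
  rw [add_mul, add_mul, mul_assoc (Ay K * Ay K) (Ax K) (Ax K), relA K, mul_zero, add_zero] at h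
  rw [← mul_assoc, eq_neg_of_add_eq_zero_left h, relB' K]
  abel

lemma c2 : Ax K * (Ay K * Ay K) = 0 := by
  have h : Ax K * (Ax K * Ay K + Ay K * Ay K + Ay K * Ay K * Ax K) = 0 := by
    rw [relB K, mul_zero]
  rw [mul_add, mul_add, ← mul_assoc (Ax K) (Ax K) (Ay K), relA K, zero_mul, zero_add,
    ← mul_assoc (Ax K) (Ay K * Ay K) (Ax K)] at h
  have h1 : (Ax K * (Ay K * Ay K)) * (1 + Ax K) = 0 := by
    rw [mul_add, mul_one]; exact h
  have h2 : (1 + Ax K) * (1 - Ax K) = 1 := by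
    rw [add_mul, one_mul, mul_sub, mul_one, relA K, sub_zero]
    abel
  calc Ax K * (Ay K * Ay K)
      = Ax K * (Ay K * Ay K) * ((1 + Ax K) * (1 - Ax K)) := by rw [h2, mul_one]
    _ = (Ax K * (Ay K * Ay K) * (1 + Ax K)) * (1 - Ax K) := by simp only [mul_assoc]
    _ = 0 := by rw [h1, zero_mul]

lemma c5 : Ay K * (Ay K * (Ay K * Ay K)) = 0 := by
  have h1 : (Ax K * (Ay K * Ax K)) * (Ay K * Ay K)
      = (Ax K * Ay K) * (Ax K * (Ay K * Ay K)) := by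
    simp only [mul_assoc]
  rw [c4 K, c2 K, mul_zero, add_mul] at h1
  have h2 : (Ax K * Ay K) * (Ay K * Ay K) = 0 := by
    rw [show (Ax K * Ay K) * (Ay K * Ay K) = (Ax K * (Ay K * Ay K)) * Ay K by
      simp only [mul_assoc], c2 K, zero_mul]
  rw [h2, zero_add] at h1
  rw [show Ay K * (Ay K * (Ay K * Ay K)) = (Ay K * Ay K) * (Ay K * Ay K) by
    simp only [mul_assoc]]
  exact h1

lemma s1 (t : AlgA K) : Ax K * (Ax K * t) = 0 := by
  rw [← mul_assoc, relA K, zero_mul]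

lemma s2 (t : AlgA K) : Ax K * (Ay K * (Ay K * t)) = 0 := by
  rw [show Ax K * (Ay K * (Ay K * t)) = (Ax K * (Ay K * Ay K)) * t by
    simp only [mul_assoc], c2 K, zero_mul]

lemma s3 (t : AlgA K) :
    Ay K * (Ay K * (Ax K * t)) = -(Ax K * (Ay K * t)) - Ay K * (Ay K * t) := by
  rw [show Ay K * (Ay K * (Ax K * t)) = (Ay K * (Ay K * Ax K)) * t by
    simp only [mul_assoc], c3 K, sub_mul, neg_mul, mul_assoc, mul_assoc]

lemma s4 (t : AlgA K) :
    Ax K * (Ay K * (Ax K * t)) = Ax K * (Ay K * t) + Ay K * (Ay K * t) := by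
  rw [show Ax K * (Ay K * (Ax K * t)) = (Ax K * (Ay K * Ax K)) * t by
    simp only [mul_assoc], c4 K, add_mul, mul_assoc, mul_assoc]

lemma s5 (t : AlgA K) : Ay K * (Ay K * (Ay K * (Ay K * t))) = 0 := by
  rw [show Ay K * (Ay K * (Ay K * (Ay K * t))) = (Ay K * (Ay K * (Ay K * Ay K))) * t by
    simp only [mul_assoc], c5 K, zero_mul]

def G1 : Set (AlgA K) := {Ax K, Ay K, Ay K * Ay K, Ay K * (Ay K * Ay K), Ax K * Ay K, Ay K * Ax K, Ay K * (Ax K * Ay K)}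
def G2 : Set (AlgA K) := {Ax K * Ay K, Ay K * Ax K, Ay K * Ay K, Ay K * (Ay K * Ay K), Ay K * (Ax K * Ay K)}
def G3 : Set (AlgA K) := {Ax K * Ay K, Ay K * Ay K, Ay K * (Ay K * Ay K), Ay K * (Ax K * Ay K)}
def G4 : Set (AlgA K) := {Ay K * (Ay K * Ay K), Ay K * (Ax K * Ay K)}
def G5 : Set (AlgA K) := {Ay K * (Ay K * Ay K)}

lemma memG1_1 : Ax K ∈ Submodule.span K (G1 K) :=
  Submodule.subset_span (show Ax K ∈ G1 K from (Set.mem_insert _ _))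
lemma memG1_2 : Ay K ∈ Submodule.span K (G1 K) :=
  Submodule.subset_span (show Ay K ∈ G1 K from (Set.mem_insert_of_mem _ (Set.mem_insert _ _)))
lemma memG1_3 : Ay K * Ay K ∈ Submodule.span K (G1 K) :=
  Submodule.subset_span (show Ay K * Ay K ∈ G1 K from (Set.mem_insert_of_mem _ (Set.mem_insert_of_mem _ (Set.mem_insert _ _))))
lemma memG1_4 : Ay K * (Ay K * Ay K) ∈ Submodule.span K (G1 K) :=
  Submodule.subset_span (show Ay K * (Ay K * Ay K) ∈ G1 K from (Set.mem_insert_of_mem _ (Set.mem_insert_of_mem _ (Set.mem_insert_of_mem _ (Set.mem_insert _ _)))))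
lemma memG1_5 : Ax K * Ay K ∈ Submodule.span K (G1 K) :=
  Submodule.subset_span (show Ax K * Ay K ∈ G1 K from (Set.mem_insert_of_mem _ (Set.mem_insert_of_mem _ (Set.mem_insert_of_mem _ (Set.mem_insert_of_mem _ (Set.mem_insert _ _))))))
lemma memG1_6 : Ay K * Ax K ∈ Submodule.span K (G1 K) :=
  Submodule.subset_span (show Ay K * Ax K ∈ G1 K from (Set.mem_insert_of_mem _ (Set.mem_insert_of_mem _ (Set.mem_insert_of_mem _ (Set.mem_insert_of_mem _ (Set.mem_insert_of_mem _ (Set.mem_insert _ _)))))))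
lemma memG1_7 : Ay K * (Ax K * Ay K) ∈ Submodule.span K (G1 K) :=
  Submodule.subset_span (show Ay K * (Ax K * Ay K) ∈ G1 K from (Set.mem_insert_of_mem _ (Set.mem_insert_of_mem _ (Set.mem_insert_of_mem _ (Set.mem_insert_of_mem _ (Set.mem_insert_of_mem _ (Set.mem_insert_of_mem _ (Set.mem_singleton _))))))))

lemma memG2_1 : Ax K * Ay K ∈ Submodule.span K (G2 K) :=
  Submodule.subset_span (show Ax K * Ay K ∈ G2 K from (Set.mem_insert _ _))
lemma memG2_2 : Ay K * Ax K ∈ Submodule.span K (G2 K) :=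
  Submodule.subset_span (show Ay K * Ax K ∈ G2 K from (Set.mem_insert_of_mem _ (Set.mem_insert _ _)))
lemma memG2_3 : Ay K * Ay K ∈ Submodule.span K (G2 K) :=
  Submodule.subset_span (show Ay K * Ay K ∈ G2 K from (Set.mem_insert_of_mem _ (Set.mem_insert_of_mem _ (Set.mem_insert _ _))))
lemma memG2_4 : Ay K * (Ay K * Ay K) ∈ Submodule.span K (G2 K) :=
  Submodule.subset_span (show Ay K * (Ay K * Ay K) ∈ G2 K from (Set.mem_insert_of_mem _ (Set.mem_insert_of_mem _ (Set.mem_insert_of_mem _ (Set.mem_insert _ _)))))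
lemma memG2_5 : Ay K * (Ax K * Ay K) ∈ Submodule.span K (G2 K) :=
  Submodule.subset_span (show Ay K * (Ax K * Ay K) ∈ G2 K from (Set.mem_insert_of_mem _ (Set.mem_insert_of_mem _ (Set.mem_insert_of_mem _ (Set.mem_insert_of_mem _ (Set.mem_singleton _))))))

lemma memG3_1 : Ax K * Ay K ∈ Submodule.span K (G3 K) :=
  Submodule.subset_span (show Ax K * Ay K ∈ G3 K from (Set.mem_insert _ _))
lemma memG3_2 : Ay K * Ay K ∈ Submodule.span K (G3 K) :=
  Submodule.subset_span (show Ay K * Ay K ∈ G3 K from (Set.mem_insert_of_mem _ (Set.mem_insert _ _)))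
lemma memG3_3 : Ay K * (Ay K * Ay K) ∈ Submodule.span K (G3 K) :=
  Submodule.subset_span (show Ay K * (Ay K * Ay K) ∈ G3 K from (Set.mem_insert_of_mem _ (Set.mem_insert_of_mem _ (Set.mem_insert _ _))))
lemma memG3_4 : Ay K * (Ax K * Ay K) ∈ Submodule.span K (G3 K) :=
  Submodule.subset_span (show Ay K * (Ax K * Ay K) ∈ G3 K from (Set.mem_insert_of_mem _ (Set.mem_insert_of_mem _ (Set.mem_insert_of_mem _ (Set.mem_singleton _)))))

lemma memG4_1 : Ay K * (Ay K * Ay K) ∈ Submodule.span K (G4 K) :=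
  Submodule.subset_span (show Ay K * (Ay K * Ay K) ∈ G4 K from (Set.mem_insert _ _))
lemma memG4_2 : Ay K * (Ax K * Ay K) ∈ Submodule.span K (G4 K) :=
  Submodule.subset_span (show Ay K * (Ax K * Ay K) ∈ G4 K from (Set.mem_insert_of_mem _ (Set.mem_singleton _)))

lemma memG5_1 : Ay K * (Ay K * Ay K) ∈ Submodule.span K (G5 K) :=
  Submodule.subset_span (show Ay K * (Ay K * Ay K) ∈ G5 K from (Set.mem_singleton _))

set_option maxHeartbeats 1000000 in
lemma step1 : ∀ a ∈ Submodule.span K (G1 K), ∀ b ∈ Submodule.span K (G1 K),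
    a * b ∈ Submodule.span K (G2 K) := by
  apply span_mul_span_le
  intro a ha b hb
  simp only [G1, G1, Set.mem_insert_iff, Set.mem_singleton_iff] at ha hb
  rcases ha with rfl|rfl|rfl|rfl|rfl|rfl|rfl <;> rcases hb with rfl|rfl|rfl|rfl|rfl|rfl|rfl <;>
    (try simp only [relA, c2, c3, c4, c5, s1, s2, s3, s4, s5, mul_assoc, mul_add, mul_sub, mul_neg, mul_zero, mul_one, add_mul, sub_mul, neg_mul, zero_mul, one_mul, zero_add, add_zero, neg_zero, sub_zero, zero_sub, neg_neg]) <;>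
    apply_rules [zero_mem, add_mem, sub_mem, neg_mem, memG2_1, memG2_2, memG2_3, memG2_4, memG2_5]

set_option maxHeartbeats 1000000 in
lemma step2 : ∀ a ∈ Submodule.span K (G1 K), ∀ b ∈ Submodule.span K (G2 K),
    a * b ∈ Submodule.span K (G3 K) := by
  apply span_mul_span_le
  intro a ha b hb
  simp only [G1, G2, Set.mem_insert_iff, Set.mem_singleton_iff] at ha hb
  rcases ha with rfl|rfl|rfl|rfl|rfl|rfl|rfl <;> rcases hb with rfl|rfl|rfl|rfl|rfl <;>
    (try simp only [relA, c2, c3, c4, c5, s1, s2, s3, s4, s5, mul_assoc, mul_add, mul_sub, mul_neg, mul_zero, mul_one, add_mul, sub_mul, neg_mul, zero_mul, one_mul, zero_add, add_zero, neg_zero, sub_zero, zero_sub, neg_neg]) <;>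
    apply_rules [zero_mem, add_mem, sub_mem, neg_mem, memG3_1, memG3_2, memG3_3, memG3_4]

set_option maxHeartbeats 1000000 in
lemma step3 : ∀ a ∈ Submodule.span K (G1 K), ∀ b ∈ Submodule.span K (G3 K),
    a * b ∈ Submodule.span K (G4 K) := by
  apply span_mul_span_le
  intro a ha b hb
  simp only [G1, G3, Set.mem_insert_iff, Set.mem_singleton_iff] at ha hb
  rcases ha with rfl|rfl|rfl|rfl|rfl|rfl|rfl <;> rcases hb with rfl|rfl|rfl|rfl <;>
    (try simp only [relA, c2, c3, c4, c5, s1, s2, s3, s4, s5, mul_assoc, mul_add, mul_sub, mul_neg, mul_zero, mul_one, add_mul, sub_mul, neg_mul, zero_mul, one_mul, zero_add, add_zero, neg_zero, sub_zero, zero_sub, neg_neg]) <;>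
    apply_rules [zero_mem, add_mem, sub_mem, neg_mem, memG4_1, memG4_2]

set_option maxHeartbeats 1000000 in
lemma step4 : ∀ a ∈ Submodule.span K (G1 K), ∀ b ∈ Submodule.span K (G4 K),
    a * b ∈ Submodule.span K (G5 K) := by
  apply span_mul_span_le
  intro a ha b hb
  simp only [G1, G4, Set.mem_insert_iff, Set.mem_singleton_iff] at ha hb
  rcases ha with rfl|rfl|rfl|rfl|rfl|rfl|rfl <;> rcases hb with rfl|rfl <;>
    (try simp only [relA, c2, c3, c4, c5, s1, s2, s3, s4, s5, mul_assoc, mul_add, mul_sub, mul_neg, mul_zero, mul_one, add_mul, sub_mul, neg_mul, zero_mul, one_mul, zero_add, add_zero, neg_zero, sub_zero, zero_sub, neg_neg]) <;>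
    apply_rules [zero_mem, add_mem, sub_mem, neg_mem, memG5_1]

set_option maxHeartbeats 1000000 in
lemma step5 : ∀ a ∈ Submodule.span K (G1 K), ∀ b ∈ Submodule.span K (G5 K),
    a * b ∈ (⊥ : Submodule K (AlgA K)) := by
  apply span_mul_span_le
  intro a ha b hb
  simp only [G1, G5, Set.mem_insert_iff, Set.mem_singleton_iff] at ha hb
  rcases ha with rfl|rfl|rfl|rfl|rfl|rfl|rfl <;> rcases hb with rfl <;>
    (try simp only [relA, c2, c3, c4, c5, s1, s2, s3, s4, s5, mul_assoc, mul_add, mul_sub, mul_neg, mul_zero, mul_one, add_mul, sub_mul, neg_mul, zero_mul, one_mul, zero_add, add_zero, neg_zero, sub_zero, zero_sub, neg_neg]) <;>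
    simp only [Submodule.mem_bot]

lemma G2_le : Submodule.span K (G2 K) ≤ Submodule.span K (G1 K) := by
  apply Submodule.span_mono
  intro x hx
  simp only [G2, Set.mem_insert_iff, Set.mem_singleton_iff] at hx
  simp only [G1, Set.mem_insert_iff, Set.mem_singleton_iff]
  tauto

lemma pow6 (m : AlgA K) (hm : m ∈ Submodule.span K (G1 K)) : m ^ 6 = 0 := by
  have h2 := step1 K m hm m hm
  have h3 := step2 K m hm _ h2
  have h4 := step3 K m hm _ h3
  have h5 := step4 K m hm _ h4
  have h6 := step5 K m hm _ h5
  rw [Submodule.mem_bot] at h6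
  have e : m ^ 6 = m * (m * (m * (m * (m * m)))) := by
    rw [show (6 : ℕ) = 1 + 1 + 1 + 1 + 1 + 1 by norm_num]
    rw [pow_add, pow_add, pow_add, pow_add, pow_add, pow_one]
    simp only [mul_assoc]
  rw [e, h6]

/-- underlying map of the augmentation -/
def epsF : FreeAlgebra K (Fin 2) →ₐ[K] K := FreeAlgebra.lift K (fun _ => (0 : K))

lemma epsW : ∀ ⦃a b : FreeAlgebra K (Fin 2)⦄, ARel K a b → epsF K a = epsF K b := by
  intro a b h
  cases h <;> simp [epsF, Xg, Yg]

/-- The augmentation map `A → K`. -/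
def eps : AlgA K →ₐ[K] K := RingQuot.liftAlgHom K ⟨epsF K, epsW K⟩

lemma eps_mk (x : FreeAlgebra K (Fin 2)) :
    eps K (RingQuot.mkAlgHom K (ARel K) x) = epsF K x := by
  unfold eps
  exact RingQuot.liftAlgHom_mkAlgHom_apply K (epsF K) (epsW K) x

lemma eps_Ax : eps K (Ax K) = 0 := by
  rw [show Ax K = RingQuot.mkAlgHom K (ARel K) (Xg K) from rfl, eps_mk]
  simp [epsF, Xg]

lemma eps_Ay : eps K (Ay K) = 0 := by
  rw [show Ay K = RingQuot.mkAlgHom K (ARel K) (Yg K) from rfl, eps_mk]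
  simp [epsF, Yg]

lemma decomp (a : AlgA K) :
    a - algebraMap K (AlgA K) (eps K a) ∈ Submodule.span K (G1 K) ∧
      ∀ n ∈ Submodule.span K (G1 K), a * n ∈ Submodule.span K (G1 K) := by
  obtain ⟨f, rfl⟩ := RingQuot.mkAlgHom_surjective K (ARel K) a
  induction f using FreeAlgebra.induction with
  | grade0 r =>
    have h1 : RingQuot.mkAlgHom K (ARel K) (algebraMap K (FreeAlgebra K (Fin 2)) r)
        = algebraMap K (AlgA K) r := (RingQuot.mkAlgHom K (ARel K)).commutes r
    rw [h1]
    constructor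
    · have h2 : eps K (algebraMap K (AlgA K) r) = r := (eps K).commutes r
      rw [h2, sub_self]
      exact zero_mem _
    · intro n hn
      rw [← Algebra.smul_def]
      exact Submodule.smul_mem _ _ hn
  | grade1 i =>
    fin_cases i
    · constructor
      · show Ax K - algebraMap K (AlgA K) (eps K (Ax K)) ∈ _
        rw [eps_Ax, map_zero, sub_zero]
        exact memG1_1 K
      · intro n hn
        show Ax K * n ∈ _
        exact G2_le K (step1 K _ (memG1_1 K) n hn)
    · constructor
      · show Ay K - algebraMap K (AlgA K) (eps K (Ay K)) ∈ _
        rw [eps_Ay, map_zero, sub_zero]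
        exact memG1_2 K
      · intro n hn
        show Ay K * n ∈ _
        exact G2_le K (step1 K _ (memG1_2 K) n hn)
  | mul x y hx hy =>
    rw [map_mul]
    set A : AlgA K := RingQuot.mkAlgHom K (ARel K) x with hA
    set B : AlgA K := RingQuot.mkAlgHom K (ARel K) y with hB
    change A * B - algebraMap K (AlgA K) (eps K (A * B)) ∈ Submodule.span K (G1 K) ∧
      ∀ n ∈ Submodule.span K (G1 K), A * B * n ∈ Submodule.span K (G1 K)
    constructor
    · have e : A * B - algebraMap K (AlgA K) (eps K (A * B)) =
          A * (B - algebraMap K (AlgA K) (eps K B)) +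
            eps K B • (A - algebraMap K (AlgA K) (eps K A)) := by
        rw [map_mul, Algebra.smul_def, mul_sub, mul_sub, map_mul,
          Algebra.commutes (eps K B) A,
          Algebra.commutes (eps K B) (algebraMap K (AlgA K) (eps K A))]
        abel
      rw [e]
      exact add_mem (hx.2 _ hy.1) (Submodule.smul_mem _ _ hx.1)
    · intro n hn
      rw [mul_assoc]
      exact hx.2 _ (hy.2 n hn)
  | add x y hx hy =>
    rw [map_add]
    set A : AlgA K := RingQuot.mkAlgHom K (ARel K) x with hA
    set B : AlgA K := RingQuot.mkAlgHom K (ARel K) y with hB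
    change A + B - algebraMap K (AlgA K) (eps K (A + B)) ∈ Submodule.span K (G1 K) ∧
      ∀ n ∈ Submodule.span K (G1 K), (A + B) * n ∈ Submodule.span K (G1 K)
    constructor
    · have e : A + B - algebraMap K (AlgA K) (eps K (A + B)) =
          (A - algebraMap K (AlgA K) (eps K A)) + (B - algebraMap K (AlgA K) (eps K B)) := by
        rw [map_add, map_add]
        abel
      rw [e]
      exact add_mem hx.1 hy.1
    · intro n hn
      rw [add_mul]
      exact add_mem (hx.2 n hn) (hy.2 n hn)

lemma isUnit_of_eps_ne (a : AlgA K) (h : eps K a ≠ 0) : IsUnit a := by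
  have hm : a - algebraMap K (AlgA K) (eps K a) ∈ Submodule.span K (G1 K) := (decomp K a).1
  have hn : (eps K a)⁻¹ • (a - algebraMap K (AlgA K) (eps K a)) ∈ Submodule.span K (G1 K) :=
    Submodule.smul_mem _ _ hm
  have hnil : IsNilpotent ((eps K a)⁻¹ • (a - algebraMap K (AlgA K) (eps K a))) :=
    ⟨6, pow6 K _ hn⟩
  have hu : IsUnit (1 + (eps K a)⁻¹ • (a - algebraMap K (AlgA K) (eps K a))) :=
    hnil.isUnit_one_add
  have e : a = algebraMap K (AlgA K) (eps K a) *
      (1 + (eps K a)⁻¹ • (a - algebraMap K (AlgA K) (eps K a))) := by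
    rw [mul_add, mul_one, ← Algebra.smul_def, smul_smul, mul_inv_cancel₀ h, one_smul]
    abel
  rw [e]
  exact ((isUnit_iff_ne_zero.mpr h).map (algebraMap K (AlgA K))).mul hu

lemma eps_isUnit_of_isUnit {a : AlgA K} (h : IsUnit a) : eps K a ≠ 0 := by
  obtain ⟨u, rfl⟩ := h
  have h1 : eps K (u : AlgA K) * eps K ((u⁻¹ : (AlgA K)ˣ) : AlgA K) = 1 := by
    rw [← map_mul, u.mul_inv, map_one]
  intro h0
  rw [h0, zero_mul] at h1
  exact zero_ne_one h1

/-- The unique maximal left ideal of `Aᵐᵒᵖ`. -/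
def Mop : Ideal (AlgA K)ᵐᵒᵖ where
  carrier := {a | eps K a.unop = 0}
  add_mem' := by
    intro a b ha hb
    simp only [Set.mem_setOf_eq] at *
    rw [MulOpposite.unop_add, map_add, ha, hb, add_zero]
  zero_mem' := by
    simp only [Set.mem_setOf_eq, MulOpposite.unop_zero, map_zero]
  smul_mem' := by
    intro c x hx
    simp only [Set.mem_setOf_eq] at *
    rw [smul_eq_mul, MulOpposite.unop_mul, map_mul, hx, zero_mul]

lemma mem_Mop_iff (a : (AlgA K)ᵐᵒᵖ) : a ∈ Mop K ↔ eps K a.unop = 0 := Iff.rfl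

lemma isUnit_op_iff (a : (AlgA K)ᵐᵒᵖ) : IsUnit a ↔ IsUnit a.unop :=
  isUnit_unop.symm

lemma Mop_isMaximal : (Mop K).IsMaximal := by
  constructor
  constructor
  · intro htop
    have h1 : (1 : (AlgA K)ᵐᵒᵖ) ∈ Mop K := htop ▸ Submodule.mem_top
    rw [mem_Mop_iff, MulOpposite.unop_one, map_one] at h1
    exact one_ne_zero h1
  · intro J hJ
    obtain ⟨x, hxJ, hxM⟩ := Set.not_subset.mp (fun h => hJ.ne (le_antisymm hJ.le h))
    rw [SetLike.mem_coe, mem_Mop_iff] at hxM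
    have hu : IsUnit x := (isUnit_op_iff K x).mpr (isUnit_of_eps_ne K _ hxM)
    exact J.eq_top_of_isUnit_mem hxJ hu

lemma Mop_unique (J : Ideal (AlgA K)ᵐᵒᵖ) (hJ : J.IsMaximal) : J = Mop K := by
  have hle : J ≤ Mop K := by
    intro x hx
    rw [mem_Mop_iff]
    by_contra hne
    have hu : IsUnit x := (isUnit_op_iff K x).mpr (isUnit_of_eps_ne K _ hne)
    exact hJ.ne_top (J.eq_top_of_isUnit_mem hx hu)
  exact hJ.eq_of_le (Mop_isMaximal K).ne_top hle

lemma mem_jac_iff (a : AlgA K) : a ∈ jacRad K ↔ eps K a = 0 := by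
  rw [jacRad, TwoSidedIdeal.mem_jacobson_iff]
  constructor
  · intro h
    by_contra hne
    obtain ⟨z, hz⟩ := h (algebraMap K (AlgA K) (-(eps K a)⁻¹))
    rw [TwoSidedIdeal.mem_bot] at hz
    have h1 := congrArg (eps K) hz
    rw [map_sub, map_add, map_mul, map_mul, AlgHom.commutes, map_one, map_zero] at h1
    rw [Algebra.algebraMap_self_apply, mul_assoc, neg_mul, inv_mul_cancel₀ hne, mul_neg_one] at h1
    simp at h1
  · intro h y
    have ha : a ∈ Submodule.span K (G1 K) := by
      have h1 := (decomp K a).1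
      rwa [h, map_zero, sub_zero] at h1
    have hya : y * a ∈ Submodule.span K (G1 K) := (decomp K y).2 a ha
    have hnil : IsNilpotent (y * a) := ⟨6, pow6 K _ hya⟩
    obtain ⟨u, hu⟩ := hnil.isUnit_one_add
    refine ⟨((u⁻¹ : (AlgA K)ˣ) : AlgA K), ?_⟩
    rw [TwoSidedIdeal.mem_bot]
    have hinv : ((u⁻¹ : (AlgA K)ˣ) : AlgA K) * (1 + y * a) = 1 := by
      rw [← hu]
      exact u.inv_mul
    have e : ((u⁻¹ : (AlgA K)ˣ) : AlgA K) * y * a + ((u⁻¹ : (AlgA K)ˣ) : AlgA K) - 1 =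
        ((u⁻¹ : (AlgA K)ˣ) : AlgA K) * (1 + y * a) - 1 := by
      rw [mul_add, mul_one, mul_assoc]
      abel
    rw [e, hinv, sub_self]

lemma eps_eq_of_rel {a b : AlgA K} (h : (jacRad K).ringCon a b) : eps K a = eps K b := by
  have h1 : a - b ∈ jacRad K := (TwoSidedIdeal.rel_iff _ a b).mp h
  have h2 : eps K (a - b) = 0 := (mem_jac_iff K _).mp h1
  rw [map_sub, sub_eq_zero] at h2
  exact h2

/-- The induced map on the quotient. -/
def epsBar : (jacRad K).ringCon.Quotient →ₐ[K] K where
  toFun q := Quotient.liftOn' q (eps K) fun _ _ h => eps_eq_of_rel K h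
  map_one' := map_one (eps K)
  map_mul' x y := Quotient.inductionOn₂' x y fun a b => map_mul (eps K) a b
  map_zero' := map_zero (eps K)
  map_add' x y := Quotient.inductionOn₂' x y fun a b => map_add (eps K) a b
  commutes' r := (eps K).commutes r

lemma epsBar_bij : Function.Bijective (epsBar K) := by
  constructor
  · intro q1 q2
    refine Quotient.inductionOn₂' q1 q2 fun a b h => ?_
    have hab : eps K a = eps K b := h
    apply Quotient.sound'
    show (jacRad K).ringCon a b
    rw [TwoSidedIdeal.rel_iff]
    rw [mem_jac_iff, map_sub, hab, sub_self]
  · intro k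
    exact ⟨(jacRad K).ringCon.toQuotient (algebraMap K (AlgA K) k), (eps K).commutes k⟩

/-- The quotient of `A` by its Jacobson radical is isomorphic to `K`. -/
def finalEquiv : (jacRad K).ringCon.Quotient ≃ₐ[K] K :=
  AlgEquiv.ofBijective (epsBar K) (epsBar_bij K)

end StmtThreeAux

/-- The algebra `A = K⟨x,y⟩/(x², xy + y² + y²x)` over a field `K` of characteristic 0 is a
local ring (it has a unique maximal right ideal, i.e. a unique maximal left ideal of `Aᵐᵒᵖ`),
and its quotient by its Jacobson radical is isomorphic to `K` as a `K`-algebra. -/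
theorem stmt_3 (K : Type u) [Field K] [CharZero K] :
    (∃! I : Ideal (AlgA K)ᵐᵒᵖ, I.IsMaximal) ∧
    Nonempty ((jacRad K).ringCon.Quotient ≃ₐ[K] K) := by
  constructor
  · exact ⟨StmtThreeAux.Mop K, StmtThreeAux.Mop_isMaximal K, StmtThreeAux.Mop_unique K⟩
  · exact ⟨StmtThreeAux.finalEquiv K⟩

end
end

section
/- The algebra A = K⟨x,y⟩/(x², xy + y² + y²x) over a field K of characteristic 0 is not self-injective, i.e., the right regular module A_A is not an injective A-module. -/
universe u

noncomputable section

namespace StmtAux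

variable (K : Type u) [Field K]

/-- image of x in A -/
def xA : AlgA K := RingQuot.mkAlgHom K (ARel K) (Xg K)

/-- image of y in A -/
def yA : AlgA K := RingQuot.mkAlgHom K (ARel K) (Yg K)

local notation "x" => xA K
local notation "y" => yA K

lemma hx2 : x * x = 0 := by
  have := RingQuot.mkAlgHom_rel K (ARel.sq (K := K))
  simp only [map_mul, map_zero] at this
  exact this

lemma hrel : x * y + y * y + y * (y * x) = 0 := by
  have := RingQuot.mkAlgHom_rel K (ARel.mix (K := K))
  simp only [map_add, map_mul, map_zero] at this
  simp only [mul_assoc] at this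
  exact this

lemma h1 : x * (y * x) + y * (y * x) = 0 := by
  have e := congrArg (· * x) (hrel K)
  simp only [add_mul, zero_mul, mul_assoc] at e
  have hz : y * (y * (x * x)) = 0 := by rw [hx2]; simp
  rw [hz, add_zero] at e
  exact e

lemma h2 : x * (y * (y * x)) = 0 := by
  have e := congrArg (x * ·) (h1 K)
  simp only [mul_add, mul_zero] at e
  have hz : x * (x * (y * x)) = 0 := by rw [← mul_assoc, hx2, zero_mul]
  rw [hz, zero_add] at e
  exact e

lemma h3 : x * (y * y) = 0 := by
  have e := congrArg (x * ·) (hrel K)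
  simp only [mul_add, mul_zero] at e
  have hz : x * (x * y) = 0 := by rw [← mul_assoc, hx2, zero_mul]
  rw [hz, zero_add, h2, add_zero] at e
  exact e

lemma h4 : y * (y * (y * y)) = 0 := by
  have e := congrArg (· * (y * y)) (hrel K)
  simp only [add_mul, zero_mul, mul_assoc] at e
  have hz1 : x * (y * (y * y)) = 0 := by
    rw [show y * (y * y) = (y * y) * y by rw [mul_assoc], ← mul_assoc, h3, zero_mul]
  have hz2 : y * (y * (x * (y * y))) = 0 := by rw [h3]; simp
  rw [hz1, zero_add, hz2, add_zero] at e
  exact e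

lemma h5 : y * (y * (x * y)) = 0 := by
  have e := congrArg ((y * y) * ·) (hrel K)
  simp only [mul_add, mul_zero, mul_assoc] at e
  have hz1 : y * (y * (y * y)) = 0 := h4 K
  have hz2 : y * (y * (y * (y * x))) = 0 := by
    have : y * (y * (y * (y * x))) = (y * (y * (y * y))) * x := by simp [mul_assoc]
    rw [this, h4, zero_mul]
  rw [hz1, hz2, add_zero, add_zero] at e
  exact e

lemma h6 : y * (y * y) = 0 := by
  have e := congrArg (· * y) (hrel K)
  simp only [add_mul, zero_mul, mul_assoc] at e
  rw [h3, zero_add, h5, add_zero] at e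
  exact e

lemma h7 : y * (x * y) = 0 := by
  have e := congrArg (y * ·) (hrel K)
  simp only [mul_add, mul_zero] at e
  have hz : y * (y * (y * x)) = 0 := by
    have : y * (y * (y * x)) = (y * (y * y)) * x := by simp [mul_assoc]
    rw [this, h6, zero_mul]
  rw [h6, hz, add_zero, add_zero] at e
  exact e

/-- the element u = xy + y² -/
def uA : AlgA K := x * y + y * y

/-- the element v = yx -/
def vA : AlgA K := y * x

lemma hux : uA K * x = 0 := by
  have := h1 K
  simpa [uA, add_mul, mul_assoc] using this

lemma huy : uA K * y = 0 := by
  simp only [uA, add_mul, mul_assoc, h3, h6, add_zero]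

lemma hvx : vA K * x = 0 := by
  simp only [vA, mul_assoc, hx2, mul_zero]

lemma hvy : vA K * y = 0 := by
  simp only [vA, mul_assoc, h7]

lemma hxu : x * uA K = 0 := by
  have hz : x * (x * y) = 0 := by rw [← mul_assoc, hx2, zero_mul]
  simp only [uA, mul_add, hz, h3, add_zero]

lemma hyu : y * uA K = 0 := by
  simp only [uA, mul_add, h7, h6, add_zero]

/-- the augmentation A → K, x ↦ 0, y ↦ 0 -/
def εF : FreeAlgebra K (Fin 2) →ₐ[K] K := FreeAlgebra.lift K (fun _ => (0 : K))

lemma εFrel : ∀ ⦃a b⦄, ARel K a b → εF K a = εF K b := by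
  rintro _ _ ⟨⟩ <;> simp [εF, Xg, Yg]

def ε : AlgA K →ₐ[K] K := RingQuot.liftAlgHom K ⟨εF K, εFrel K⟩

lemma εx : ε K x = 0 := by
  show RingQuot.liftAlgHom K ⟨εF K, εFrel K⟩ (RingQuot.mkAlgHom K (ARel K) (Xg K)) = 0
  rw [RingQuot.liftAlgHom_mkAlgHom_apply]
  simp [εF, Xg]

lemma εy : ε K y = 0 := by
  show RingQuot.liftAlgHom K ⟨εF K, εFrel K⟩ (RingQuot.mkAlgHom K (ARel K) (Yg K)) = 0
  rw [RingQuot.liftAlgHom_mkAlgHom_apply]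
  simp [εF, Yg]

lemma right_mul (w : AlgA K) (hwx : w * x = 0) (hwy : w * y = 0) :
    ∀ a : AlgA K, w * a = ε K a • w := by
  intro a
  obtain ⟨p, rfl⟩ := RingQuot.mkAlgHom_surjective K (ARel K) a
  induction p using FreeAlgebra.induction with
  | grade0 r =>
      rw [AlgHom.commutes]
      have hε : ε K ((algebraMap K (RingQuot (ARel K))) r) = r := by
        exact ((ε K).commutes r).trans (by simp)
      erw [hε, Algebra.algebraMap_eq_smul_one]
      exact (Algebra.mul_smul_comm r w (1 : AlgA K)).trans (by rw [mul_one])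
  | grade1 i =>
      fin_cases i
      · show w * x = ε K x • w
        rw [hwx, εx, zero_smul]
      · show w * y = ε K y • w
        rw [hwy, εy, zero_smul]
  | mul a b ha hb =>
      erw [map_mul, ← mul_assoc, ha, smul_mul_assoc, hb, map_mul, smul_smul]
  | add a b ha hb =>
      erw [map_add]
      exact (mul_add w _ _).trans (by rw [ha, hb]; erw [map_add, add_smul])

lemma left_mul (w : AlgA K) (hxw : x * w = 0) (hyw : y * w = 0) :
    ∀ a : AlgA K, a * w = ε K a • w := by
  intro a
  obtain ⟨p, rfl⟩ := RingQuot.mkAlgHom_surjective K (ARel K) a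
  induction p using FreeAlgebra.induction with
  | grade0 r =>
      rw [AlgHom.commutes]
      have hε : ε K ((algebraMap K (RingQuot (ARel K))) r) = r := by
        exact ((ε K).commutes r).trans (by simp)
      erw [hε, Algebra.algebraMap_eq_smul_one]
      exact (Algebra.smul_mul_assoc r (1 : AlgA K) w).trans (by rw [one_mul])
  | grade1 i =>
      fin_cases i
      · show x * w = ε K x • w
        rw [hxw, εx, zero_smul]
      · show y * w = ε K y • w
        rw [hyw, εy, zero_smul]
  | mul a b ha hb =>
      erw [map_mul, mul_assoc, hb, mul_smul_comm, ha, map_mul, smul_smul, mul_comm]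
  | add a b ha hb =>
      erw [map_add]
      exact (add_mul _ _ w).trans (by rw [ha, hb]; erw [map_add, add_smul])

/-- 5×5 matrix representing x -/
def Xm : Matrix (Fin 5) (Fin 5) K :=
  !![0,0,0,0,0; 1,0,0,0,0; 0,0,0,0,0; 0,0,0,0,0; 0,0,1,2,0]

/-- 5×5 matrix representing y -/
def Ym : Matrix (Fin 5) (Fin 5) K :=
  !![0,0,0,0,0; 0,0,0,0,0; 1,0,0,0,0; 0,1,0,0,0; 0,0,1,-2,0]

set_option maxHeartbeats 1600000 in
lemma hXm2 : Xm K * Xm K = 0 := by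
  ext i j
  fin_cases i <;> fin_cases j <;>
    norm_num [Xm, Matrix.mul_apply, Fin.sum_univ_succ]

set_option maxHeartbeats 1600000 in
lemma hXYrel : Xm K * Ym K + Ym K * Ym K + Ym K * Ym K * Xm K = 0 := by
  ext i j
  fin_cases i <;> fin_cases j <;>
    norm_num [Xm, Ym, Matrix.mul_apply, Fin.sum_univ_succ]

/-- the representation ρ : A → M₅(K) -/
def ρF : FreeAlgebra K (Fin 2) →ₐ[K] Matrix (Fin 5) (Fin 5) K :=
  FreeAlgebra.lift K ![Xm K, Ym K]

lemma ρFrel : ∀ ⦃a b⦄, ARel K a b → ρF K a = ρF K b := by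
  rintro _ _ ⟨⟩ <;>
    simp only [map_add, map_mul, map_zero, Xg, Yg, ρF, FreeAlgebra.lift_ι_apply,
      Matrix.cons_val_zero, Matrix.cons_val_one, Matrix.head_cons]
  · exact hXm2 K
  · exact hXYrel K

def ρ : AlgA K →ₐ[K] Matrix (Fin 5) (Fin 5) K := RingQuot.liftAlgHom K ⟨ρF K, ρFrel K⟩

lemma ρx : ρ K x = Xm K := by
  show RingQuot.liftAlgHom K ⟨ρF K, ρFrel K⟩ (RingQuot.mkAlgHom K (ARel K) (Xg K)) = Xm K
  rw [RingQuot.liftAlgHom_mkAlgHom_apply]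
  simp [ρF, Xg]

lemma ρy : ρ K y = Ym K := by
  show RingQuot.liftAlgHom K ⟨ρF K, ρFrel K⟩ (RingQuot.mkAlgHom K (ARel K) (Yg K)) = Ym K
  rw [RingQuot.liftAlgHom_mkAlgHom_apply]
  simp [ρF, Yg]

variable [CharZero K]

lemma u_ne_zero : uA K ≠ 0 := by
  intro h
  have := congrArg (ρ K) h
  rw [uA, map_zero, map_add, map_mul, map_mul, ρx, ρy] at this
  have e := congrFun (congrFun this 4) 0
  simp [Xm, Ym, Matrix.mul_apply, Fin.sum_univ_succ] at e

lemma sep : ∀ t : K, vA K ≠ t • uA K := by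
  intro t h
  have := congrArg (ρ K) h
  rw [vA, uA, map_smul, map_add, map_mul, map_mul, map_mul, ρx, ρy] at this
  have e := congrFun (congrFun this 3) 0
  simp [Xm, Ym, Matrix.mul_apply, Fin.sum_univ_succ, Matrix.smul_apply] at e

end StmtAux

/-- The algebra `A = K⟨x,y⟩/(x², xy + y² + y²x)` over a field `K` of characteristic 0 is not
self-injective: the right regular module `A_A` (that is, `A` as a left `Aᵐᵒᵖ`-module) is not
injective. -/
theorem stmt_4 (K : Type u) [Field K] [CharZero K] :
    ¬ Module.Injective (AlgA K)ᵐᵒᵖ (AlgA K) := by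
  intro h
  classical
  letI : Module (AlgA K)ᵐᵒᵖ K :=
    Module.compHom K ((StmtAux.ε K).toRingHom.fromOpposite fun a b => mul_comm _ _)
  have hsmulK : ∀ (a : (AlgA K)ᵐᵒᵖ) (t : K), a • t = StmtAux.ε K a.unop * t := fun _ _ => rfl
  have hsmulA : ∀ (a : (AlgA K)ᵐᵒᵖ) (w : AlgA K), a • w = w * a.unop := fun _ _ => rfl
  set u := StmtAux.uA K with hu
  set v := StmtAux.vA K with hv
  have hruns : ∀ (w : AlgA K), w * StmtAux.xA K = 0 → w * StmtAux.yA K = 0 →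
      ∀ a : (AlgA K)ᵐᵒᵖ, ∀ t : K, (t • w) * a.unop = (StmtAux.ε K a.unop * t) • w := by
    intro w hwx hwy a t
    rw [smul_mul_assoc, StmtAux.right_mul K w hwx hwy, smul_smul, mul_comm]
  let f : K →ₗ[(AlgA K)ᵐᵒᵖ] AlgA K :=
    { toFun := fun t => t • u
      map_add' := fun s t => add_smul s t u
      map_smul' := fun a t => by
        simp only [RingHom.id_apply, hsmulK, hsmulA]
        exact (hruns u (StmtAux.hux K) (StmtAux.huy K) a t).symm }
  let g : K →ₗ[(AlgA K)ᵐᵒᵖ] AlgA K :=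
    { toFun := fun t => t • v
      map_add' := fun s t => add_smul s t v
      map_smul' := fun a t => by
        simp only [RingHom.id_apply, hsmulK, hsmulA]
        exact (hruns v (StmtAux.hvx K) (StmtAux.hvy K) a t).symm }
  have hf : Function.Injective f := by
    intro s t hst
    by_contra hne
    have hst' : (s - t) • u = 0 := by
      rw [sub_smul, sub_eq_zero]
      exact hst
    have : u = 0 := by
      have := congrArg (fun z => (s - t)⁻¹ • z) hst'
      simpa [smul_smul, inv_mul_cancel₀ (sub_ne_zero.mpr hne)] using this
    exact StmtAux.u_ne_zero K this
  obtain ⟨φ, hφ⟩ := h.out f hf g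
  have hv1 : v = φ u := by
    have := hφ 1
    simp only [f, g, LinearMap.coe_mk, AddHom.coe_mk, one_smul] at this
    exact this.symm
  have h2 : φ u = StmtAux.ε K (φ 1) • u := by
    have hu1 : φ u = φ ((MulOpposite.op u) • (1 : AlgA K)) := by
      rw [hsmulA, MulOpposite.unop_op, one_mul]
    rw [hu1, map_smul, hsmulA, MulOpposite.unop_op]
    exact StmtAux.left_mul K u (StmtAux.hxu K) (StmtAux.hyu K) (φ 1)
  exact StmtAux.sep K _ (hv1.trans h2)

end
end
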